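/- arXiv:2307.06772 — 2 statements merged into one kernel-verified Lean document; each statement's English description precedes it below -/
import Mathlib

section
/- Let v be the first vertex of the path P satisfying the cover condition, and set C* := Partition(v) ∩ P_{⪯v}. Then there exists a minimum weight vertex cover of the entire path P that contains C*. -/
open Finset

/-- `C` is a vertex cover of the subpath of the path `P = (v_0, …, v_{n-1})`
induced by the vertices `v_lo, v_{lo+1}, …, v_{hi-1}` (half-open interval `[lo, hi)`);
the edges of this subpath are `{v_i, v_{i+1}}` for `lo ≤ i` and `i + 1 < hi`. -/
def IsCoverOn (lo hi : ℕ) (C : Finset ℕ) : Prop :=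
  (∀ j ∈ C, lo ≤ j ∧ j < hi) ∧ ∀ i : ℕ, lo ≤ i → i + 1 < hi → (i ∈ C ∨ i + 1 ∈ C)

/-- The total weight `ω(C) = ∑_{v ∈ C} ω(v)` of a set of vertices. -/
def wsum (ω : ℕ → ℝ) (C : Finset ℕ) : ℝ := ∑ j ∈ C, ω j

/-- `C` is a minimum weight vertex cover (MWVC) of the subpath on the vertices `[lo, hi)`. -/
def IsMWVCOn (ω : ℕ → ℝ) (lo hi : ℕ) (C : Finset ℕ) : Prop :=
  IsCoverOn lo hi C ∧ ∀ D : Finset ℕ, IsCoverOn lo hi D → wsum ω C ≤ wsum ω D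

/-- `Partition(v_l) ∩ P_{⪯ v_l}`: the vertices up to (and including) `v_l` lying on the
same side of the path's bipartition as `v_l`. -/
def sameSide (l : ℕ) : Finset ℕ := (range (l + 1)).filter fun j => j % 2 = l % 2

/-- `P_{⪯ v_l} ∖ Partition(v_l)`: the vertices up to `v_l` on the opposite side. -/
def otherSide (l : ℕ) : Finset ℕ := (range (l + 1)).filter fun j => j % 2 ≠ l % 2

/-- `v_l` satisfies the (weak) cover condition. -/
def CoverCond (ω : ℕ → ℝ) (l : ℕ) : Prop := wsum ω (sameSide l) ≤ wsum ω (otherSide l)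

/-- `v_l` satisfies the strict cover condition. -/
def StrictCoverCond (ω : ℕ → ℝ) (l : ℕ) : Prop := wsum ω (sameSide l) < wsum ω (otherSide l)

lemma mem_sameSide {j l : ℕ} : j ∈ sameSide l ↔ j < l + 1 ∧ j % 2 = l % 2 := by
  simp [sameSide]

lemma mem_otherSide {j l : ℕ} : j ∈ otherSide l ↔ j < l + 1 ∧ j % 2 ≠ l % 2 := by
  simp [otherSide]

lemma sameSide_zero : sameSide 0 = {0} := by
  ext j; simp [mem_sameSide]; omega

lemma otherSide_zero : otherSide 0 = ∅ := by
  ext j; simp [mem_otherSide]; omega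

lemma otherSide_succ_eq (m : ℕ) : otherSide (m + 1) = sameSide m := by
  ext j; simp [mem_otherSide, mem_sameSide]; omega

lemma sameSide_succ (m : ℕ) : sameSide (m + 1) = insert (m + 1) (otherSide m) := by
  ext j; simp [mem_sameSide, mem_otherSide]; omega

lemma notMem_otherSide (m : ℕ) : (m + 1) ∉ otherSide m := by
  simp [mem_otherSide]

lemma key (ω : ℕ → ℝ) (l : ℕ) (hfirst : ∀ j, j < l → ¬ CoverCond ω j) :
    ∀ m, m ≤ l → ∀ D : Finset ℕ, IsCoverOn 0 (m + 1) D →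
      (m ∈ D → wsum ω (sameSide m) ≤ wsum ω D) ∧
      (m ∉ D → wsum ω (otherSide m) ≤ wsum ω D) := by
  intro m
  induction m with
  | zero =>
    intro _ D hD
    constructor
    · intro h0
      have hsub : D ⊆ {0} := by
        intro j hj
        have := hD.1 j hj
        simp; omega
      have hD0 : D = {0} := Finset.Subset.antisymm hsub (by simpa using h0)
      rw [hD0, sameSide_zero]
    · intro h0
      have hD0 : D = ∅ := by
        apply Finset.eq_empty_iff_forall_notMem.mpr
        intro j hj
        have := hD.1 j hj
        have : j = 0 := by omega
        exact h0 (this ▸ hj)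
      rw [hD0, otherSide_zero]
  | succ m ih =>
    intro hml D hD
    by_cases hm : m + 1 ∈ D
    · refine ⟨fun _ => ?_, fun h => absurd hm h⟩
      set D' := D.erase (m + 1) with hD'def
      have hcov : IsCoverOn 0 (m + 1) D' := by
        constructor
        · intro j hj
          have hj1 := Finset.mem_of_mem_erase hj
          have hj2 := Finset.ne_of_mem_erase hj
          have := hD.1 j hj1
          omega
        · intro i _ hi
          rcases hD.2 i (Nat.zero_le _) (by omega) with h | h
          · exact Or.inl (Finset.mem_erase.mpr ⟨by omega, h⟩)
          · exact Or.inr (Finset.mem_erase.mpr ⟨by omega, h⟩)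
      have hIH := ih (by omega) D' hcov
      have hO : wsum ω (otherSide m) ≤ wsum ω D' := by
        by_cases hmD : m ∈ D'
        · have h1 := hIH.1 hmD
          have h2 : wsum ω (otherSide m) < wsum ω (sameSide m) := by
            have := hfirst m (by omega)
            simpa [CoverCond, not_le] using this
          linarith
        · exact hIH.2 hmD
      have hsum : wsum ω D = ω (m + 1) + wsum ω D' := by
        rw [wsum, wsum, ← Finset.add_sum_erase _ _ hm]
      have hsame : wsum ω (sameSide (m + 1)) = ω (m + 1) + wsum ω (otherSide m) := by
        rw [sameSide_succ, wsum, Finset.sum_insert (notMem_otherSide m)]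
        rfl
      linarith
    · refine ⟨fun h => absurd h hm, fun _ => ?_⟩
      have hmem : m ∈ D := by
        rcases hD.2 m (Nat.zero_le _) (by omega) with h | h
        · exact h
        · exact absurd h hm
      have hcov : IsCoverOn 0 (m + 1) D := by
        constructor
        · intro j hj
          have h1 := hD.1 j hj
          have h2 : j ≠ m + 1 := fun e => hm (e ▸ hj)
          omega
        · intro i h0 hi
          exact hD.2 i h0 (by omega)
      have := (ih (by omega) D hcov).1 hmem
      rw [otherSide_succ_eq]
      exact this

lemma local_min (ω : ℕ → ℝ) (l : ℕ) (hcc : CoverCond ω l)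
    (hfirst : ∀ j, j < l → ¬ CoverCond ω j) :
    ∀ D : Finset ℕ, IsCoverOn 0 (l + 1) D → wsum ω (sameSide l) ≤ wsum ω D := by
  intro D hD
  by_cases h : l ∈ D
  · exact (key ω l hfirst l le_rfl D hD).1 h
  · exact le_trans hcc ((key ω l hfirst l le_rfl D hD).2 h)

lemma exists_mwvc (ω : ℕ → ℝ) (n : ℕ) : ∃ C, IsMWVCOn ω 0 n C := by
  classical
  set S := (range n).powerset.filter (fun D => IsCoverOn 0 n D) with hS
  have hne : S.Nonempty := by
    refine ⟨range n, ?_⟩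
    simp only [hS, Finset.mem_filter, Finset.mem_powerset]
    refine ⟨subset_rfl, ?_, ?_⟩
    · intro j hj
      simp at hj
      omega
    · intro i _ hi
      exact Or.inl (mem_range.mpr (by omega))
  obtain ⟨C, hCS, hmin⟩ := Finset.exists_min_image S (wsum ω) hne
  have hC : IsCoverOn 0 n C := (Finset.mem_filter.mp hCS).2
  refine ⟨C, hC, fun D hD => ?_⟩
  apply hmin
  simp only [hS, Finset.mem_filter, Finset.mem_powerset]
  exact ⟨fun j hj => mem_range.mpr (hD.1 j hj).2, hD⟩


/-- If `v_l` is the first vertex of the path satisfying the cover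
condition, then some MWVC of the whole path contains `Partition(v_l) ∩ P_{⪯ v_l}`. -/
theorem stmt_1 (n l : ℕ) (ω : ℕ → ℝ) (hl : l < n)
    (hcc : CoverCond ω l) (hfirst : ∀ j, j < l → ¬ CoverCond ω j) :
    ∃ C : Finset ℕ, IsMWVCOn ω 0 n C ∧ sameSide l ⊆ C := by
  obtain ⟨C, hCcov, hCmin⟩ := exists_mwvc ω n
  set C' := (C \ range (l + 1)) ∪ sameSide l with hC'def
  have hsub : sameSide l ⊆ C' := Finset.subset_union_right
  have hcov' : IsCoverOn 0 n C' := by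
    constructor
    · intro j hj
      rcases Finset.mem_union.mp hj with h | h
      · exact hCcov.1 j (Finset.mem_sdiff.mp h).1
      · have := mem_sameSide.mp h
        omega
    · intro i _ hi
      rcases lt_trichotomy i l with h | h | h
      · by_cases hp : i % 2 = l % 2
        · exact Or.inl (Finset.mem_union_right _ (mem_sameSide.mpr ⟨by omega, hp⟩))
        · exact Or.inr (Finset.mem_union_right _ (mem_sameSide.mpr ⟨by omega, by omega⟩))
      · exact Or.inl (Finset.mem_union_right _ (mem_sameSide.mpr ⟨by omega, by omega⟩))
      · rcases hCcov.2 i (Nat.zero_le _) hi with hc | hc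
        · exact Or.inl (Finset.mem_union_left _ (Finset.mem_sdiff.mpr ⟨hc, by simp; omega⟩))
        · exact Or.inr (Finset.mem_union_left _ (Finset.mem_sdiff.mpr ⟨hc, by simp; omega⟩))
  have hinter : IsCoverOn 0 (l + 1) (C ∩ range (l + 1)) := by
    constructor
    · intro j hj
      have := Finset.mem_inter.mp hj
      simp at this
      omega
    · intro i _ hi
      rcases hCcov.2 i (Nat.zero_le _) (by omega) with hc | hc
      · exact Or.inl (Finset.mem_inter.mpr ⟨hc, mem_range.mpr (by omega)⟩)
      · exact Or.inr (Finset.mem_inter.mpr ⟨hc, mem_range.mpr (by omega)⟩)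
  have hloc : wsum ω (sameSide l) ≤ wsum ω (C ∩ range (l + 1)) :=
    local_min ω l hcc hfirst _ hinter
  have hdisj : Disjoint (C \ range (l + 1)) (sameSide l) := by
    apply Finset.disjoint_left.mpr
    intro a ha hb
    have h1 := (Finset.mem_sdiff.mp ha).2
    have h2 := mem_sameSide.mp hb
    exact h1 (mem_range.mpr h2.1)
  have hsplit : wsum ω (C ∩ range (l + 1)) + wsum ω (C \ range (l + 1)) = wsum ω C := by
    rw [wsum, wsum, wsum]
    exact Finset.sum_inter_add_sum_sdiff _ _ _
  have hunion : wsum ω C' = wsum ω (C \ range (l + 1)) + wsum ω (sameSide l) := by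
    rw [hC'def, wsum, Finset.sum_union hdisj]
    rfl
  have hle : wsum ω C' ≤ wsum ω C := by linarith
  exact ⟨C', ⟨hcov', fun D hD => le_trans hle (hCmin D hD)⟩, hsub⟩
end

section
/- Suppose the vertex v of the path P satisfies the (weak) cover condition and no proper predecessor of v satisfies the strict cover condition. Then there exists a minimum weight vertex cover of P containing Partition(v) ∩ P_{⪯v}; in particular, there is a minimum weight vertex cover of P containing v. -/
open Finset

lemma sameSide_one : sameSide 1 = {1} := by
  ext j; simp only [sameSide, mem_filter, mem_range, mem_singleton]; omega

lemma sameSide_succ_succ (j : ℕ) : sameSide (j + 2) = insert (j + 2) (sameSide j) := by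
  ext i; simp [sameSide]; omega

lemma otherSide_succ (j : ℕ) : otherSide (j + 1) = sameSide j := by
  ext i; simp [otherSide, sameSide]; omega

noncomputable def Tfun (ω : ℕ → ℝ) : ℕ → ℝ
  | 0 => wsum ω (sameSide 0)
  | j + 1 => wsum ω (sameSide (j + 1)) - wsum ω (sameSide j)

lemma sum_Tfun (ω : ℕ → ℝ) (l : ℕ) :
    ∑ i ∈ range (l + 1), Tfun ω i = wsum ω (sameSide l) := by
  induction l with
  | zero => simp [Tfun]
  | succ k ih => rw [sum_range_succ, ih]; simp [Tfun]

lemma omega_eq (ω : ℕ → ℝ) (j : ℕ) :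
    ω j = Tfun ω j + (if j = 0 then 0 else Tfun ω (j - 1)) := by
  match j with
  | 0 => simp [Tfun, sameSide_zero, wsum]
  | 1 => simp [Tfun, sameSide_zero, sameSide_one, wsum]
  | (k + 2) =>
    have hnot : (k + 2) ∉ sameSide k := by simp [sameSide]
    have h : wsum ω (sameSide (k + 2)) = ω (k + 2) + wsum ω (sameSide k) := by
      rw [sameSide_succ_succ, wsum, sum_insert hnot]; rfl
    have e1 : Tfun ω (k + 2) = wsum ω (sameSide (k + 2)) - wsum ω (sameSide (k + 1)) := rfl
    have e2 : Tfun ω (k + 2 - 1) = wsum ω (sameSide (k + 1)) - wsum ω (sameSide k) := rfl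
    rw [if_neg (by omega : ¬ k + 2 = 0), e1, e2]
    linarith

lemma key_ineq (ω : ℕ → ℝ) (l : ℕ) (D : Finset ℕ)
    (hD : ∀ j ∈ D, j < l + 1)
    (hcov : ∀ i, i + 1 ≤ l → i ∈ D ∨ i + 1 ∈ D)
    (ht : ∀ i, i < l → 0 ≤ Tfun ω i) (htl : Tfun ω l ≤ 0) :
    wsum ω (sameSide l) ≤ wsum ω D := by
  classical
  have hsub : D ⊆ range (l + 1) := fun j hj => mem_range.mpr (hD j hj)
  have h1 : wsum ω D = ∑ j ∈ D, Tfun ω j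
      + ∑ j ∈ D, (if j = 0 then 0 else Tfun ω (j - 1)) := by
    rw [wsum, ← sum_add_distrib]
    exact sum_congr rfl fun j _ => omega_eq ω j
  have h2 : ∑ i ∈ range (l + 1), (if i ∈ D then Tfun ω i else 0) = ∑ j ∈ D, Tfun ω j := by
    rw [sum_ite_mem, inter_eq_right.mpr hsub]
  have h3 : ∑ i ∈ range (l + 1),
      (if i ∈ D then (if i = 0 then (0:ℝ) else Tfun ω (i - 1)) else 0)
      = ∑ j ∈ D, (if j = 0 then 0 else Tfun ω (j - 1)) := by
    rw [sum_ite_mem, inter_eq_right.mpr hsub]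
  have h4 : ∑ i ∈ range (l + 1),
      (if i ∈ D then (if i = 0 then (0:ℝ) else Tfun ω (i - 1)) else 0)
      = ∑ i ∈ range l, (if i + 1 ∈ D then Tfun ω i else 0) := by
    rw [sum_range_succ']
    simp
  have hterm : ∀ i ∈ range l, Tfun ω i ≤
      (if i ∈ D then Tfun ω i else 0) + (if i + 1 ∈ D then Tfun ω i else 0) := by
    intro i hi
    have hi' := mem_range.mp hi
    have hT := ht i hi'
    rcases hcov i (by omega) with h | h
    · rw [if_pos h]; split <;> linarith
    · rw [if_pos h]; split <;> linarith
  have hsum := sum_le_sum hterm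
  rw [sum_add_distrib] at hsum
  have hlast : Tfun ω l ≤ (if l ∈ D then Tfun ω l else 0) := by
    split <;> linarith
  rw [← sum_Tfun, sum_range_succ, h1, ← h2, ← h3, h4, sum_range_succ]
  linarith

lemma Tfun_nonneg (ω : ℕ → ℝ) (l : ℕ) (hpred : ∀ j, j < l → ¬ StrictCoverCond ω j) :
    ∀ i, i < l → 0 ≤ Tfun ω i := by
  intro i hi
  have h := hpred i hi
  rw [StrictCoverCond, not_lt] at h
  match i with
  | 0 =>
    rw [otherSide_zero] at h
    simpa [Tfun, wsum] using h
  | k + 1 =>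
    rw [otherSide_succ] at h
    simp only [Tfun]
    linarith

lemma Tfun_last (ω : ℕ → ℝ) (l : ℕ) (hcc : CoverCond ω l) : Tfun ω l ≤ 0 := by
  rw [CoverCond] at hcc
  match l with
  | 0 =>
    rw [otherSide_zero] at hcc
    simpa [Tfun, wsum] using hcc
  | k + 1 =>
    rw [otherSide_succ] at hcc
    simp only [Tfun]
    linarith

/-- If `v_l` satisfies the (weak) cover condition and no proper
predecessor of `v_l` satisfies the strict cover condition, then there is a MWVC of the
whole path containing `Partition(v_l) ∩ P_{⪯ v_l}`; in particular one containing `v_l`. -/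
theorem stmt_8 (n l : ℕ) (ω : ℕ → ℝ) (hl : l < n)
    (hcc : CoverCond ω l) (hpred : ∀ j, j < l → ¬ StrictCoverCond ω j) :
    ∃ C : Finset ℕ, IsMWVCOn ω 0 n C ∧ sameSide l ⊆ C ∧ l ∈ C := by
  classical
  have hrange : IsCoverOn 0 n (range n) :=
    ⟨fun j hj => ⟨Nat.zero_le _, mem_range.mp hj⟩,
     fun i _ hi => Or.inl (mem_range.mpr (by omega))⟩
  obtain ⟨C, hCmem, hCmin⟩ := Finset.exists_min_image
    ((range n).powerset.filter (fun C => IsCoverOn 0 n C)) (wsum ω)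
    ⟨range n, by simp [hrange]⟩
  rw [mem_filter] at hCmem
  have hCcov : IsCoverOn 0 n C := hCmem.2
  have hmin : ∀ D, IsCoverOn 0 n D → wsum ω C ≤ wsum ω D := by
    intro D hD
    apply hCmin
    rw [mem_filter, mem_powerset]
    exact ⟨fun j hj => mem_range.mpr (hD.1 j hj).2, hD⟩
  set C' := sameSide l ∪ (C \ range (l + 1)) with hC'def
  have hss_sub : ∀ a ∈ sameSide l, a < l + 1 := fun a ha =>
    mem_range.mp (mem_filter.mp ha).1
  have hdisj : Disjoint (sameSide l) (C \ range (l + 1)) := by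
    rw [disjoint_left]
    intro a ha hb
    exact (mem_sdiff.mp hb).2 (mem_range.mpr (hss_sub a ha))
  -- the key inequality
  have hD0 : wsum ω (sameSide l) ≤ wsum ω (C ∩ range (l + 1)) := by
    apply key_ineq ω l _ (fun j hj => mem_range.mp (mem_inter.mp hj).2)
      _ (Tfun_nonneg ω l hpred) (Tfun_last ω l hcc)
    intro i hi
    rcases hCcov.2 i (Nat.zero_le _) (by omega) with h | h
    · exact Or.inl (mem_inter.mpr ⟨h, mem_range.mpr (by omega)⟩)
    · exact Or.inr (mem_inter.mpr ⟨h, mem_range.mpr (by omega)⟩)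
  have hsplit : wsum ω (C ∩ range (l + 1)) + wsum ω (C \ range (l + 1)) = wsum ω C :=
    sum_inter_add_sum_sdiff _ _ _
  have hC'sum : wsum ω C' = wsum ω (sameSide l) + wsum ω (C \ range (l + 1)) := by
    rw [hC'def, wsum, sum_union hdisj]; rfl
  have hC'leC : wsum ω C' ≤ wsum ω C := by linarith
  have hC'cov : IsCoverOn 0 n C' := by
    constructor
    · intro j hj
      rcases mem_union.mp hj with h | h
      · exact ⟨Nat.zero_le _, by have := hss_sub j h; omega⟩
      · exact ⟨Nat.zero_le _, (hCcov.1 j (mem_sdiff.mp h).1).2⟩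
    · intro i _ hi
      by_cases hc : i + 1 ≤ l
      · rcases (by omega : i % 2 = l % 2 ∨ (i + 1) % 2 = l % 2) with h | h
        · exact Or.inl (mem_union_left _ (by simp [sameSide]; omega))
        · exact Or.inr (mem_union_left _ (by simp [sameSide]; omega))
      · by_cases hc2 : i = l
        · exact Or.inl (mem_union_left _ (by subst hc2; simp [sameSide]))
        · rcases hCcov.2 i (Nat.zero_le _) hi with h | h
          · exact Or.inl (mem_union_right _ (mem_sdiff.mpr ⟨h, by simp; omega⟩))
          · exact Or.inr (mem_union_right _ (mem_sdiff.mpr ⟨h, by simp; omega⟩))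
  refine ⟨C', ⟨hC'cov, fun D hD => le_trans hC'leC (hmin D hD)⟩,
    subset_union_left, mem_union_left _ (by simp [sameSide])⟩
end
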